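/- Let a : ℝ → [0,1] be the extended Cantor staircase function (a(τ) = 0 for τ ≤ 0, a(τ) = 1 for τ ≥ 1, and a restricted to [0,1] is the Cantor function), and let C ⊂ [0,1] be the ternary Cantor set. For y ∈ ℝ define C_y := { a(τ)·y²/2 + τ : τ ∈ C }. Then C_y is compact and its Lebesgue measure is ℒ¹(C_y) = y²/2. -/

import Mathlib

open MeasureTheory

/-- The n-th stage of the ternary Cantor set construction. -/
def cantorStage : ℕ → Set ℝ
  | 0 => Set.Icc 0 1
  | n + 1 => (fun x => x / 3) '' cantorStage n ∪ (fun x => 2 / 3 + x / 3) '' cantorStage n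

/-- The ternary Cantor set. -/
def ternaryCantorSet : Set ℝ := ⋂ n, cantorStage n

/-- a : ℝ → ℝ is the extended Cantor staircase function: continuous, nondecreasing,
equal to 0 on (−∞,0], 1 on [1,∞), and satisfying the Cantor self-similarity relations. -/
def IsCantorFunction (a : ℝ → ℝ) : Prop :=
  Continuous a ∧ Monotone a ∧ (∀ τ ≤ 0, a τ = 0) ∧ (∀ τ, 1 ≤ τ → a τ = 1) ∧
    ∀ τ ∈ Set.Icc (0 : ℝ) 1, a (τ / 3) = a τ / 2 ∧ a (2 / 3 + τ / 3) = 1 / 2 + a τ / 2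

lemma cantorStage_subset_Icc : ∀ n, cantorStage n ⊆ Set.Icc 0 1 := by
  intro n
  induction n with
  | zero => exact le_refl _
  | succ n ih =>
    rintro x (⟨t, ht, rfl⟩ | ⟨t, ht, rfl⟩) <;>
      obtain ⟨h0, h1⟩ := ih ht <;> constructor <;> nlinarith

lemma cantorStage_compact : ∀ n, IsCompact (cantorStage n) := by
  intro n
  induction n with
  | zero => exact isCompact_Icc
  | succ n ih =>
    exact (ih.image (by continuity)).union (ih.image (by continuity))

lemma cantorStage_antitone : Antitone cantorStage := by
  have key : ∀ n, cantorStage (n + 1) ⊆ cantorStage n := by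
    intro n
    induction n with
    | zero =>
      rintro x (⟨t, ht, rfl⟩ | ⟨t, ht, rfl⟩) <;>
        obtain ⟨h0, h1⟩ := ht <;> constructor <;> nlinarith
    | succ n ih =>
      exact Set.union_subset_union (Set.image_mono ih) (Set.image_mono ih)
  exact antitone_nat_of_succ_le key

/-- The key measure computation, by induction on the Cantor stages. -/
lemma cantor_stage_measure (a : ℝ → ℝ) (ha : IsCantorFunction a) :
    ∀ n, ∀ c : ℝ, 0 ≤ c →
      volume ((fun τ => a τ * c + τ) '' cantorStage n)
        = ENNReal.ofReal (c + (2 / 3) ^ n) := by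
  obtain ⟨hcont, hmono, h0, h1, hself⟩ := ha
  have ha0 : a 0 = 0 := h0 0 le_rfl
  have ha1 : a 1 = 1 := h1 1 le_rfl
  -- image of [0,1] under fun τ => a τ * c + τ is [0, c+1]
  have himg : ∀ c : ℝ, 0 ≤ c →
      (fun τ => a τ * c + τ) '' Set.Icc 0 1 = Set.Icc 0 (c + 1) := by
    intro c hc
    have hfmono : Monotone (fun τ => a τ * c + τ) := by
      intro x y hxy
      have := hmono hxy
      dsimp only
      nlinarith
    have hfcont : Continuous (fun τ => a τ * c + τ) := by continuity
    apply Set.Subset.antisymm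
    · rintro x ⟨t, ht, rfl⟩
      constructor
      · have := hfmono ht.1
        simpa [ha0] using this
      · have := hfmono ht.2
        simpa [ha1, add_comm] using this
    · have := intermediate_value_Icc (by norm_num : (0:ℝ) ≤ 1) hfcont.continuousOn
      simpa [ha0, ha1, add_comm] using this
  -- bounds on image of cantorStage n
  have hbound : ∀ n, ∀ c : ℝ, 0 ≤ c →
      (fun τ => a τ * c + τ) '' cantorStage n ⊆ Set.Icc 0 (c + 1) := by
    intro n c hc
    rw [← himg c hc]
    exact Set.image_mono (cantorStage_subset_Icc n)
  intro n
  induction n with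
  | zero =>
    intro c hc
    show volume ((fun τ => a τ * c + τ) '' Set.Icc 0 1) = _
    rw [himg c hc, Real.volume_Icc]
    norm_num
  | succ n ih =>
    intro c hc
    have hc' : (0:ℝ) ≤ 3 / 2 * c := by linarith
    set g : ℝ → ℝ := fun τ => a τ * (3 / 2 * c) + τ with hg
    set S : Set ℝ := g '' cantorStage n with hS
    have hScompact : IsCompact S := (cantorStage_compact n).image (by fun_prop)
    have hSsub : S ⊆ Set.Icc 0 (3 / 2 * c + 1) := hbound n _ hc'
    have hSvol : volume S = ENNReal.ofReal (3 / 2 * c + (2 / 3) ^ n) := ih _ hc'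
    -- first piece
    have hA : (fun τ => a τ * c + τ) '' ((fun x => x / 3) '' cantorStage n)
        = (fun x => x / 3) '' S := by
      rw [hS, Set.image_image, Set.image_image]
      apply Set.image_congr
      intro t ht
      have hsel := (hself t (cantorStage_subset_Icc n ht)).1
      show a (t / 3) * c + t / 3 = g t / 3
      rw [hsel, hg]; ring
    have hB : (fun τ => a τ * c + τ) '' ((fun x => 2 / 3 + x / 3) '' cantorStage n)
        = (fun x => (c / 2 + 2 / 3) + x / 3) '' S := by
      rw [hS, Set.image_image, Set.image_image]
      apply Set.image_congr
      intro t ht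
      have hsel := (hself t (cantorStage_subset_Icc n ht)).2
      show a (2 / 3 + t / 3) * c + (2 / 3 + t / 3) = c / 2 + 2 / 3 + g t / 3
      rw [hsel, hg]; ring
    -- measures of pieces
    have hthird : ∀ T : Set ℝ, (fun x : ℝ => x / 3) '' T = (fun x : ℝ => 3 * x) ⁻¹' T := by
      intro T
      ext x
      constructor
      · rintro ⟨t, ht, rfl⟩; simpa [Set.mem_preimage] using (by ring_nf; exact ht : 3 * (t / 3) ∈ T)
      · intro hx
        exact ⟨3 * x, hx, by ring⟩
    have hvolthird : ∀ T : Set ℝ, volume ((fun x : ℝ => x / 3) '' T)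
        = ENNReal.ofReal (1 / 3) * volume T := by
      intro T
      rw [hthird T, Real.volume_preimage_mul_left (by norm_num : (3:ℝ) ≠ 0)]
      congr 1
      rw [abs_of_pos]; norm_num; norm_num
    have hvolA : volume ((fun x : ℝ => x / 3) '' S)
        = ENNReal.ofReal (c / 2 + (2 / 3) ^ n / 3) := by
      rw [hvolthird, hSvol, ← ENNReal.ofReal_mul (by norm_num)]
      ring_nf
    have htrans : (fun x : ℝ => (c / 2 + 2 / 3) + x / 3) '' S
        = (fun x : ℝ => (-(c / 2 + 2 / 3)) + x) ⁻¹' ((fun x : ℝ => x / 3) '' S) := by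
      ext x
      simp only [Set.mem_image, Set.mem_preimage]
      constructor
      · rintro ⟨t, ht, rfl⟩; exact ⟨t, ht, by ring⟩
      · rintro ⟨t, ht, h⟩; exact ⟨t, ht, by linarith⟩
    have hvolB : volume ((fun x : ℝ => (c / 2 + 2 / 3) + x / 3) '' S)
        = ENNReal.ofReal (c / 2 + (2 / 3) ^ n / 3) := by
      rw [htrans, measure_preimage_add, hvolA]
    -- disjointness
    have hdisj : Disjoint ((fun x : ℝ => x / 3) '' S)
        ((fun x : ℝ => (c / 2 + 2 / 3) + x / 3) '' S) := by
      apply Set.disjoint_left.mpr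
      rintro x ⟨t, ht, rfl⟩ ⟨s, hs, hx⟩
      have h1 := (hSsub ht).2
      have h2 := (hSsub hs).1
      nlinarith
    have hmeasB : MeasurableSet ((fun x : ℝ => (c / 2 + 2 / 3) + x / 3) '' S) :=
      (hScompact.image (by fun_prop)).isClosed.measurableSet
    show volume ((fun τ => a τ * c + τ) ''
        ((fun x => x / 3) '' cantorStage n ∪ (fun x => 2 / 3 + x / 3) '' cantorStage n)) = _
    rw [Set.image_union, hA, hB, measure_union hdisj hmeasB, hvolA, hvolB,
      ← ENNReal.ofReal_add (by positivity) (by positivity)]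
    congr 1
    ring

/-- C_y = {a(τ)y²/2 + τ : τ ∈ C} is compact of Lebesgue measure y²/2. -/
theorem stmt_12 (a : ℝ → ℝ) (ha : IsCantorFunction a) (y : ℝ) :
    IsCompact ((fun τ => a τ * y ^ 2 / 2 + τ) '' ternaryCantorSet) ∧
    volume ((fun τ => a τ * y ^ 2 / 2 + τ) '' ternaryCantorSet) = ENNReal.ofReal (y ^ 2 / 2) := by
  obtain ⟨hcont, hmono, h0, h1, hself⟩ := ha
  set c : ℝ := y ^ 2 / 2 with hcdef
  have hc : 0 ≤ c := by positivity
  have hCcompact : IsCompact ternaryCantorSet := by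
    apply IsCompact.of_isClosed_subset (cantorStage_compact 0)
    · exact isClosed_iInter fun n => (cantorStage_compact n).isClosed
    · exact Set.iInter_subset _ 0
  have hfcont : Continuous (fun τ => a τ * y ^ 2 / 2 + τ) := by continuity
  have hfeq : (fun τ => a τ * y ^ 2 / 2 + τ) = fun τ => a τ * c + τ := by
    funext τ; rw [hcdef]; ring
  refine ⟨hCcompact.image hfcont, ?_⟩
  rw [hfeq]
  have hinj : Function.Injective (fun τ => a τ * c + τ) := by
    have hsm : StrictMono (fun τ => a τ * c + τ) := by
      intro x y hxy
      have := hmono hxy.le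
      dsimp only
      nlinarith
    exact hsm.injective
  have himage : (fun τ => a τ * c + τ) '' ternaryCantorSet
      = ⋂ n, (fun τ => a τ * c + τ) '' cantorStage n := by
    rw [ternaryCantorSet]
    exact (hinj.injOn).image_iInter_eq
  rw [himage]
  have hmeas : ∀ n, NullMeasurableSet ((fun τ => a τ * c + τ) '' cantorStage n) volume :=
    fun n => (((cantorStage_compact n).image (by fun_prop)).isClosed.measurableSet).nullMeasurableSet
  have hdir : Directed (· ⊇ ·) (fun n => (fun τ => a τ * c + τ) '' cantorStage n) := by
    intro m n
    exact ⟨max m n, Set.image_mono (cantorStage_antitone (le_max_left m n)),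
      Set.image_mono (cantorStage_antitone (le_max_right m n))⟩
  have hkey := cantor_stage_measure a ⟨hcont, hmono, h0, h1, hself⟩
  have hfin : ∃ n, volume ((fun τ => a τ * c + τ) '' cantorStage n) ≠ ⊤ := by
    exact ⟨0, by rw [hkey 0 c hc]; exact ENNReal.ofReal_ne_top⟩
  rw [Directed.measure_iInter hmeas hdir hfin]
  have hvals : ∀ n, volume ((fun τ => a τ * c + τ) '' cantorStage n)
      = ENNReal.ofReal (c + (2 / 3) ^ n) := fun n => hkey n c hc
  simp_rw [hvals]
  -- infimum computation
  have hanti : Antitone (fun n : ℕ => ENNReal.ofReal (c + (2 / 3) ^ n)) := by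
    intro m n hmn
    apply ENNReal.ofReal_le_ofReal
    have : (2 / 3 : ℝ) ^ n ≤ (2 / 3) ^ m :=
      pow_le_pow_of_le_one (by norm_num) (by norm_num) hmn
    linarith
  have htendsto : Filter.Tendsto (fun n : ℕ => ENNReal.ofReal (c + (2 / 3) ^ n))
      Filter.atTop (nhds (ENNReal.ofReal c)) := by
    apply ENNReal.tendsto_ofReal
    have : Filter.Tendsto (fun n : ℕ => (2 / 3 : ℝ) ^ n) Filter.atTop (nhds 0) :=
      tendsto_pow_atTop_nhds_zero_of_lt_one (by norm_num) (by norm_num)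
    simpa using (tendsto_const_nhds (x := c)).add this
  exact tendsto_nhds_unique (tendsto_atTop_iInf hanti) htendsto
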